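/- arXiv:1808.08906 — 3 statements merged into one kernel-verified Lean document; each statement's English description precedes it below -/
import Mathlib

section
/- For $k \in \mathbb{N}$, the number $I_n(k)$ of permutations of $[n]$ with exactly $k$ inversions satisfies $I_n(k) = \sum_{T \subseteq [n]} (-1)^{|T|} \binom{n - 1 + k - \omega(T)}{n-1}$, where $\omega(T) = \sum_{i \in T} i$ and $\binom{a}{b} := 0$ whenever $a < b$ or $b < 0$ or $a < 0$. -/
/-- The number of inversions of a permutation of `Fin n`. -/
def invPerm {n : ℕ} (θ : Equiv.Perm (Fin n)) : ℕ :=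
  (Finset.univ.filter (fun p : Fin n × Fin n => p.1 < p.2 ∧ θ p.2 < θ p.1)).card

/-- The binomial coefficient `C(a,b)` for `a : ℤ`, equal to `0` when `a < 0` or `a < b`. -/
def intChoose (a : ℤ) (b : ℕ) : ℤ := if 0 ≤ a then (a.toNat.choose b : ℤ) else 0

section strip
variable {n : ℕ} (θ : Equiv.Perm (Fin (n+1)))

lemma ne_last (i : Fin n) : θ ((θ⁻¹ (Fin.last n)).succAbove i) ≠ Fin.last n := by
  intro h
  exact Fin.succAbove_ne _ i ((Equiv.eq_symm_apply θ).mpr h)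

noncomputable def strip : Equiv.Perm (Fin n) :=
  Equiv.ofBijective (fun i => (θ ((θ⁻¹ (Fin.last n)).succAbove i)).castPred (ne_last θ i))
    (Finite.injective_iff_bijective.mp (by
      intro a b hab
      simp only [Fin.castPred_inj] at hab
      exact (Fin.succAbove_right_injective) (θ.injective hab)))

lemma strip_apply (i : Fin n) :
    strip θ i = (θ ((θ⁻¹ (Fin.last n)).succAbove i)).castPred (ne_last θ i) := rfl

lemma invPerm_eq : invPerm θ = (n - (θ⁻¹ (Fin.last n) : ℕ)) + invPerm (strip θ) := by
  classical
  set j := θ⁻¹ (Fin.last n) with hj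
  have hθj : θ j = Fin.last n := θ.apply_symm_apply _
  rw [invPerm]
  have hsplit : (Finset.univ.filter (fun p : Fin (n+1) × Fin (n+1) => p.1 < p.2 ∧ θ p.2 < θ p.1))
      = (Finset.univ.filter (fun p : Fin (n+1) × Fin (n+1) => p.1 = j ∧ p.1 < p.2 ∧ θ p.2 < θ p.1))
        ∪ (Finset.univ.filter (fun p : Fin (n+1) × Fin (n+1) => p.1 ≠ j ∧ p.1 < p.2 ∧ θ p.2 < θ p.1)) := by
    rw [← Finset.filter_or]
    apply Finset.filter_congr
    intro p _
    by_cases h : p.1 = j <;> simp [h]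
  rw [hsplit, Finset.card_union_of_disjoint (by
    simp [Finset.disjoint_filter]; tauto)]
  congr 1
  · -- card = n - j
    have himg : (Finset.univ.filter (fun p : Fin (n+1) × Fin (n+1) => p.1 = j ∧ p.1 < p.2 ∧ θ p.2 < θ p.1))
        = (Finset.Ioi j).image (fun b => (j, b)) := by
      ext p
      simp only [Finset.mem_filter, Finset.mem_univ, true_and, Finset.mem_image, Finset.mem_Ioi]
      constructor
      · rintro ⟨h1, h2, _⟩
        exact ⟨p.2, h1 ▸ h2, Prod.ext h1.symm rfl⟩
      · rintro ⟨b, hb, rfl⟩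
        refine ⟨rfl, hb, ?_⟩
        rw [hθj]
        refine Fin.lt_last_iff_ne_last.mpr (fun hc => ?_)
        exact absurd ((Equiv.eq_symm_apply θ).mpr hc) (ne_of_gt hb)
    rw [himg, Finset.card_image_of_injective _ (fun a b hab => (Prod.ext_iff.mp hab).2),
      Fin.card_Ioi]
    simp
  · -- bijection with strip
    rw [invPerm]
    refine (Finset.card_bij (fun (p : Fin n × Fin n) (_ : p ∈ _) =>
      ((j.succAbove p.1, j.succAbove p.2) : Fin (n+1) × Fin (n+1))) ?_ ?_ ?_).symm
    · rintro ⟨a, b⟩ hp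
      simp only [Finset.mem_filter, Finset.mem_univ, true_and] at hp ⊢
      obtain ⟨h1, h2⟩ := hp
      refine ⟨Fin.succAbove_ne j a, Fin.succAbove_lt_succAbove_iff.mpr h1, ?_⟩
      rw [strip_apply, strip_apply, Fin.castPred_lt_castPred_iff] at h2
      exact h2
    · rintro ⟨a, b⟩ _ ⟨c, d⟩ _ hab
      simp only [Prod.mk.injEq] at hab
      exact Prod.ext (Fin.succAbove_right_injective hab.1) (Fin.succAbove_right_injective hab.2)
    · rintro ⟨c, d⟩ hp
      simp only [Finset.mem_filter, Finset.mem_univ, true_and] at hp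
      obtain ⟨hc, h1, h2⟩ := hp
      have hd : d ≠ j := by
        intro hd
        rw [hd, hθj] at h2
        exact absurd h2 (not_lt.mpr (Fin.le_last _))
      obtain ⟨a, ha⟩ := Fin.exists_succAbove_eq (Ne.symm (Ne.symm hc))
      obtain ⟨b, hb⟩ := Fin.exists_succAbove_eq (Ne.symm (Ne.symm hd))
      refine ⟨(a, b), ?_, by simp [ha, hb]⟩
      simp only [Finset.mem_filter, Finset.mem_univ, true_and]
      constructor
      · rw [← Fin.succAbove_lt_succAbove_iff (p := j), ha, hb]; exact h1
      · rw [strip_apply, strip_apply, Fin.castPred_lt_castPred_iff, ha, hb]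
        exact h2
end strip

lemma F_bij (n : ℕ) : Function.Bijective
    (fun θ : Equiv.Perm (Fin (n+1)) =>
      ((θ⁻¹ (Fin.last n), strip θ) : Fin (n+1) × Equiv.Perm (Fin n))) := by
  rw [Fintype.bijective_iff_injective_and_card]
  constructor
  · intro θ θ' h
    simp only [Prod.mk.injEq] at h
    obtain ⟨h1, h2⟩ := h
    apply Equiv.coe_fn_injective
    funext x
    show θ x = θ' x
    rcases eq_or_ne x (θ⁻¹ (Fin.last n)) with rfl | hx
    · rw [show θ (θ⁻¹ (Fin.last n)) = Fin.last n from θ.apply_symm_apply _, h1,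
        show θ' (θ'⁻¹ (Fin.last n)) = Fin.last n from θ'.apply_symm_apply _]
    · obtain ⟨i, hi⟩ := Fin.exists_succAbove_eq (Ne.symm (Ne.symm hx))
      have h3 := DFunLike.congr_fun h2 i
      rw [strip_apply, strip_apply] at h3
      have hv := congrArg Fin.val h3
      simp only [Fin.coe_castPred] at hv
      rw [← h1] at hv
      have h4 : θ ((θ⁻¹ (Fin.last n)).succAbove i) = θ' ((θ⁻¹ (Fin.last n)).succAbove i) :=
        Fin.ext hv
      rw [hi] at h4
      exact h4
  · simp [Fintype.card_perm, Nat.factorial_succ]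

noncomputable def A (n : ℕ) : PowerSeries ℤ :=
  ∑ θ : Equiv.Perm (Fin n), (PowerSeries.X : PowerSeries ℤ) ^ (invPerm θ)

lemma A_zero : A 0 = 1 := by
  rw [A]
  rw [Finset.sum_eq_single_of_mem 1 (Finset.mem_univ _) (by
    intro b _ hb
    exact absurd (Subsingleton.elim b 1) hb)]
  have : invPerm (1 : Equiv.Perm (Fin 0)) = 0 := by
    rw [invPerm]
    simp [Finset.filter_eq_empty_iff]
  rw [this, pow_zero]

lemma A_succ (n : ℕ) :
    A (n+1) = A n * ∑ m ∈ Finset.range (n+1), (PowerSeries.X : PowerSeries ℤ)^m := by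
  rw [A, Fintype.sum_bijective _ (F_bij n)
    _ (fun p : Fin (n+1) × Equiv.Perm (Fin n) =>
        (PowerSeries.X : PowerSeries ℤ) ^ ((n - (p.1 : ℕ)) + invPerm p.2))
    (fun θ => by rw [invPerm_eq θ])]
  rw [Fintype.sum_prod_type]
  simp_rw [pow_add]
  rw [← Finset.sum_mul_sum]
  rw [mul_comm, A]
  congr 1
  rw [Fin.sum_univ_eq_sum_range (fun i => (PowerSeries.X : PowerSeries ℤ)^(n - i)) (n+1)]
  have := Finset.sum_range_reflect (fun i => (PowerSeries.X : PowerSeries ℤ)^i) (n+1)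
  simp only [Nat.add_sub_cancel] at this
  rw [← this]

lemma A_mul (n : ℕ) : A n * (1 - PowerSeries.X)^n
    = ∏ i ∈ Finset.Icc 1 n, (1 - (PowerSeries.X : PowerSeries ℤ)^i) := by
  induction n with
  | zero => simp [A_zero]
  | succ n ih =>
    rw [Finset.prod_Icc_succ_top (Nat.one_le_iff_ne_zero.mpr (Nat.succ_ne_zero n)), ← ih,
      A_succ, pow_succ]
    have hg : (∑ m ∈ Finset.range (n+1), (PowerSeries.X : PowerSeries ℤ)^m) * (1 - PowerSeries.X)
        = 1 - (PowerSeries.X : PowerSeries ℤ)^(n+1) := by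
      linear_combination -(geom_sum_mul (PowerSeries.X : PowerSeries ℤ) (n+1))
    linear_combination (A n * (1 - (PowerSeries.X : PowerSeries ℤ))^n) * hg

lemma coeff_A (n k : ℕ) : (PowerSeries.coeff k) (A n)
    = ((Finset.univ.filter (fun θ : Equiv.Perm (Fin n) => invPerm θ = k)).card : ℤ) := by
  rw [A, map_sum, Finset.card_filter]
  push_cast
  apply Finset.sum_congr rfl
  intro θ _
  rw [PowerSeries.coeff_X_pow]
  simp [eq_comm]

lemma prod_expand (n : ℕ) : ∏ i ∈ Finset.Icc 1 n, (1 - (PowerSeries.X : PowerSeries ℤ)^i)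
    = ∑ T ∈ (Finset.Icc 1 n).powerset,
        (PowerSeries.C ((-1)^T.card)) * (PowerSeries.X : PowerSeries ℤ)^(∑ i ∈ T, i) := by
  have : ∀ i ∈ Finset.Icc 1 n, (1 - (PowerSeries.X : PowerSeries ℤ)^i)
      = (-(PowerSeries.X : PowerSeries ℤ)^i) + 1 := by intro i _; ring
  rw [Finset.prod_congr rfl this, Finset.prod_add]
  apply Finset.sum_congr rfl
  intro T hT
  rw [Finset.prod_const_one, mul_one]
  rw [show (fun i => -(PowerSeries.X : PowerSeries ℤ)^i)
      = (fun i => (-1) * (PowerSeries.X : PowerSeries ℤ)^i) by funext i; ring]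
  rw [Finset.prod_mul_distrib, Finset.prod_const, Finset.prod_pow_eq_pow_sum]
  rw [map_pow, map_neg, map_one]

lemma A_eq (n : ℕ) : A n = (∑ T ∈ (Finset.Icc 1 n).powerset,
        (PowerSeries.C ((-1)^T.card)) * (PowerSeries.X : PowerSeries ℤ)^(∑ i ∈ T, i))
      * (PowerSeries.invOneSubPow ℤ n).val := by
  rw [← prod_expand, ← A_mul]
  rw [mul_assoc]
  have : ((1 : PowerSeries ℤ) - PowerSeries.X)^n * (PowerSeries.invOneSubPow ℤ n).val = 1 := by
    rw [← PowerSeries.invOneSubPow_inv_eq_one_sub_pow]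
    exact (PowerSeries.invOneSubPow ℤ n).inv_val
  rw [this, mul_one]

theorem stmt_13 (n k : ℕ) (hn : 0 < n) :
    ((Finset.univ.filter (fun θ : Equiv.Perm (Fin n) => invPerm θ = k)).card : ℤ)
      = ∑ T ∈ (Finset.Icc 1 n).powerset,
          (-1 : ℤ) ^ T.card * intChoose ((n : ℤ) - 1 + k - ∑ i ∈ T, (i : ℤ)) (n - 1) := by
  rw [← coeff_A, A_eq, Finset.sum_mul, map_sum]
  apply Finset.sum_congr rfl
  intro T hT
  rw [mul_assoc, PowerSeries.coeff_C_mul, PowerSeries.coeff_X_pow_mul',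
    PowerSeries.invOneSubPow_val_eq_mk_sub_one_add_choose_of_pos ℤ n hn]
  rw [PowerSeries.coeff_mk]
  congr 1
  have hcast : (∑ i ∈ T, (i : ℤ)) = ((∑ i ∈ T, i : ℕ) : ℤ) := by push_cast; rfl
  rw [hcast, intChoose]
  set m := ∑ i ∈ T, i with hm
  split_ifs with h1 h2 h2
  · congr 2
    omega
  · exfalso; omega
  · have hlt : ((n:ℤ) - 1 + k - m).toNat < n - 1 := by omega
    rw [Nat.choose_eq_zero_of_lt hlt, Nat.cast_zero]
  · rfl
end

section
/- For $1 \le r \le n$, $\psi_n(r) = (-1)^s$ if $2r = s(3s \pm 1)$ for some $s \in \mathbb{N}$, and $\psi_n(r) = 0$ otherwise, where $\psi_n(r)$ is the coefficient of $t^r$ in $\prod_{i=1}^n (1-t^i)$. -/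
/-- `psi n r = ∑_{T ⊆ [n], ω(T) = r} (-1)^{|T|}` where `ω(T) = ∑_{i ∈ T} i`;
equivalently the coefficient of `t^r` in `∏_{i=1}^n (1 - t^i)`. -/
def psi (n : ℕ) (r : ℤ) : ℤ :=
  ∑ T ∈ (Finset.Icc 1 n).powerset.filter (fun T : Finset ℕ => (∑ i ∈ T, (i : ℤ)) = r),
    (-1 : ℤ) ^ T.card

namespace Franklin

open Finset

/-- length of the maximal run of consecutive integers at the top of `T`. -/
def rl (T : Finset ℕ) : ℕ :=
  Nat.findGreatest (fun j => Finset.Icc (T.sup id + 1 - j) (T.sup id) ⊆ T) (T.sup id)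

/-- Franklin's involution. -/
def g (T : Finset ℕ) : Finset ℕ :=
  if h : T.Nonempty then
    if T.min' h ≤ rl T then
      (T.erase (T.min' h)).image
        (fun x => if T.sup id + 1 - T.min' h ≤ x then x + 1 else x)
    else
      insert (rl T) (T.image (fun x => if T.sup id + 1 - rl T ≤ x then x - 1 else x))
  else T

/-- the exceptional (pentagonal) sets. -/
def Pent (T : Finset ℕ) : Prop :=
  ∃ a, 1 ≤ a ∧ (T = Finset.Icc a (2*a-1) ∨ T = Finset.Icc (a+1) (2*a))

variable {T : Finset ℕ}

lemma sup_mem (hne : T.Nonempty) : T.sup id ∈ T := by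
  obtain ⟨x, hx, e⟩ := Finset.exists_mem_eq_sup T hne id
  rw [e]; exact hx

lemma le_sup' {x : ℕ} (hx : x ∈ T) : x ≤ T.sup id := Finset.le_sup (f := id) hx

lemma one_le_sup (h0 : 0 ∉ T) (hne : T.Nonempty) : 1 ≤ T.sup id := by
  have := sup_mem hne
  rcases Nat.eq_zero_or_pos (T.sup id) with h | h
  · rw [h] at this; exact absurd this h0
  · exact h

lemma rl_pos (h0 : 0 ∉ T) (hne : T.Nonempty) : 1 ≤ rl T := by
  apply Nat.le_findGreatest (one_le_sup h0 hne)
  intro x hx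
  rw [Finset.mem_Icc] at hx
  have : x = T.sup id := by omega
  rw [this]; exact sup_mem hne

lemma rl_le : rl T ≤ T.sup id := Nat.findGreatest_le _

lemma run_sub (h0 : 0 ∉ T) (hne : T.Nonempty) :
    Finset.Icc (T.sup id + 1 - rl T) (T.sup id) ⊆ T := by
  have h := rl_pos h0 hne
  have e : Nat.findGreatest (fun j => Finset.Icc (T.sup id + 1 - j) (T.sup id) ⊆ T)
      (T.sup id) = rl T := rfl
  exact Nat.findGreatest_of_ne_zero e (by omega)

lemma pred_run_not_mem (h0 : 0 ∉ T) (hne : T.Nonempty) : T.sup id - rl T ∉ T := by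
  by_cases hk : rl T = T.sup id
  · rw [hk]; simpa using h0
  · have h1 : rl T < T.sup id := lt_of_le_of_ne rl_le hk
    intro hmem
    have e : Nat.findGreatest (fun j => Finset.Icc (T.sup id + 1 - j) (T.sup id) ⊆ T)
        (T.sup id) = rl T := rfl
    have := Nat.findGreatest_is_greatest
      (P := fun j => Finset.Icc (T.sup id + 1 - j) (T.sup id) ⊆ T)
      (n := T.sup id) (k := rl T + 1) (by omega) (by omega)
    apply this
    intro x hx
    rw [Finset.mem_Icc] at hx
    rcases Nat.eq_or_lt_of_le hx.1 with h | h
    · have : x = T.sup id - rl T := by omega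
      rw [this]; exact hmem
    · exact run_sub h0 hne (Finset.mem_Icc.mpr ⟨by omega, hx.2⟩)

lemma rl_eq (h0 : 0 ∉ T) (hne : T.Nonempty) (j : ℕ) (hj1 : 1 ≤ j) (hj2 : j ≤ T.sup id)
    (hsub : Finset.Icc (T.sup id + 1 - j) (T.sup id) ⊆ T)
    (hnot : T.sup id - j ∉ T) : rl T = j := by
  have hle : j ≤ rl T := Nat.le_findGreatest hj2 hsub
  rcases Nat.eq_or_lt_of_le hle with h | h
  · omega
  · exfalso
    have hkM : rl T ≤ T.sup id := rl_le
    apply hnot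
    exact run_sub h0 hne (Finset.mem_Icc.mpr ⟨by omega, by omega⟩)

lemma min'_one_le (h0 : 0 ∉ T) (hne : T.Nonempty) : 1 ≤ T.min' hne := by
  have := T.min'_mem hne
  rcases Nat.eq_zero_or_pos (T.min' hne) with h | h
  · rw [h] at this; exact absurd this h0
  · exact h

lemma full_run (h0 : 0 ∉ T) (hne : T.Nonempty)
    (hge : T.sup id + 1 - rl T ≤ T.min' hne) :
    T = Finset.Icc (T.min' hne) (T.sup id) ∧ rl T = T.sup id + 1 - T.min' hne := by
  have hm1 : 1 ≤ T.min' hne := min'_one_le h0 hne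
  have hmM : T.min' hne ≤ T.sup id := le_sup' (T.min'_mem hne)
  have hrun : T = Finset.Icc (T.min' hne) (T.sup id) := by
    apply Finset.Subset.antisymm
    · intro x hx
      exact Finset.mem_Icc.mpr ⟨T.min'_le x hx, le_sup' hx⟩
    · intro x hx
      rw [Finset.mem_Icc] at hx
      exact run_sub h0 hne (Finset.mem_Icc.mpr ⟨by omega, hx.2⟩)
  refine ⟨hrun, rl_eq h0 hne _ (by omega) (by omega) ?_ ?_⟩
  · intro x hx
    rw [Finset.mem_Icc] at hx
    rw [hrun]
    exact Finset.mem_Icc.mpr ⟨by omega, hx.2⟩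
  · intro hmem
    have := T.min'_le _ hmem
    omega

lemma gA (h0 : 0 ∉ T) (hne : T.Nonempty) (hp : ¬ Pent T) (hA : T.min' hne ≤ rl T) :
    0 ∉ g T ∧ (∑ x ∈ g T, x) = ∑ x ∈ T, x ∧ T.card = (g T).card + 1 ∧
      ¬ Pent (g T) ∧ g (g T) = T := by
  set M := T.sup id with hM
  set m := T.min' hne with hm
  have hm1 : 1 ≤ m := min'_one_le h0 hne
  have hmM : m ≤ M := le_sup' (T.min'_mem hne)
  have hkM : rl T ≤ M := rl_le
  -- key : 2*m ≤ M
  have hkey : 2 * m ≤ M := by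
    rcases le_or_gt (M + 1 - rl T) m with hge | hlt
    · obtain ⟨hrun, hk⟩ := full_run h0 hne hge
      by_contra h2m
      exact hp ⟨m, hm1, Or.inl (by rw [hrun]; congr 1; omega)⟩
    · omega
  have hrunmem : ∀ x, M + 1 - m ≤ x → x ≤ M → x ∈ T := by
    intro x h1 h2
    exact run_sub h0 hne (Finset.mem_Icc.mpr ⟨by omega, h2⟩)
  have hg : g T = (T.erase m).image (fun x => if M + 1 - m ≤ x then x + 1 else x) := by
    rw [g, dif_pos hne, if_pos hA]
  set up := fun x => if M + 1 - m ≤ x then x + 1 else x with hup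
  have hupmono : StrictMono up := by
    intro x y hxy
    simp only [hup]
    split_ifs <;> omega
  have hupinj : Function.Injective up := hupmono.injective
  have hEmem : ∀ x ∈ T.erase m, x ∈ T ∧ m < x := by
    intro x hx
    rw [Finset.mem_erase] at hx
    have := T.min'_le x hx.2
    exact ⟨hx.2, by omega⟩
  have hmemT' : ∀ y ∈ g T, ∃ x ∈ T.erase m, up x = y := by
    intro y hy
    rw [hg, Finset.mem_image] at hy
    exact hy
  -- 0 ∉ g T
  have h0' : 0 ∉ g T := by
    intro hy
    obtain ⟨x, hx, hux⟩ := hmemT' 0 hy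
    have := (hEmem x hx).2
    simp only [hup] at hux
    split_ifs at hux <;> omega
  -- sum
  have hfilter : (T.erase m).filter (fun x => M + 1 - m ≤ x) = Finset.Icc (M + 1 - m) M := by
    ext x
    simp only [Finset.mem_filter, Finset.mem_Icc, Finset.mem_erase]
    constructor
    · rintro ⟨⟨hxm, hxT⟩, hx⟩
      exact ⟨hx, le_sup' hxT⟩
    · rintro ⟨h1, h2⟩
      exact ⟨⟨by omega, hrunmem x h1 h2⟩, h1⟩
  have hcardfil : ((T.erase m).filter (fun x => M + 1 - m ≤ x)).card = m := by
    rw [hfilter, Nat.card_Icc]; omega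
  have hsum : (∑ x ∈ g T, x) = ∑ x ∈ T, x := by
    rw [hg, Finset.sum_image (fun x _ y _ h => hupinj h)]
    have e1 : ∑ x ∈ T.erase m, up x
        = ∑ x ∈ T.erase m, (x + if M + 1 - m ≤ x then 1 else 0) := by
      apply Finset.sum_congr rfl
      intro x _
      simp only [hup]
      split_ifs <;> omega
    rw [e1, Finset.sum_add_distrib]
    have e2 : (∑ x ∈ T.erase m, if M + 1 - m ≤ x then 1 else 0)
        = ((T.erase m).filter (fun x => M + 1 - m ≤ x)).card := by
      rw [Finset.card_filter]
    have e3 : m + ∑ x ∈ T.erase m, x = ∑ x ∈ T, x :=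
      Finset.add_sum_erase T (fun x : ℕ => x) (T.min'_mem hne)
    omega
  -- card
  have hcard : T.card = (g T).card + 1 := by
    rw [hg, Finset.card_image_of_injective _ hupinj,
      Finset.card_erase_of_mem (T.min'_mem hne)]
    have : 0 < T.card := Finset.card_pos.mpr hne
    omega
  -- structure of T' := g T
  have hub : ∀ y ∈ g T, y ≤ M + 1 := by
    intro y hy
    obtain ⟨x, hx, hux⟩ := hmemT' y hy
    have := le_sup' (hEmem x hx).1
    simp only [hup] at hux
    split_ifs at hux <;> omega
  have hlb : ∀ y ∈ g T, m < y := by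
    intro y hy
    obtain ⟨x, hx, hux⟩ := hmemT' y hy
    have := (hEmem x hx).2
    simp only [hup] at hux
    split_ifs at hux <;> omega
  have hMmem : M + 1 ∈ g T := by
    rw [hg, Finset.mem_image]
    refine ⟨M, Finset.mem_erase.mpr ⟨by omega, sup_mem hne⟩, ?_⟩
    simp only [hup]
    rw [if_pos (by omega)]
  have hne' : (g T).Nonempty := ⟨M + 1, hMmem⟩
  have hsup' : (g T).sup id = M + 1 :=
    le_antisymm (Finset.sup_le fun y hy => hub y hy) (le_sup' hMmem)
  have hgap : M + 1 - m ∉ g T := by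
    intro hy
    obtain ⟨x, hx, hux⟩ := hmemT' _ hy
    simp only [hup] at hux
    split_ifs at hux <;> omega
  have hrun' : Finset.Icc (M + 2 - m) (M + 1) ⊆ g T := by
    intro y hy
    rw [Finset.mem_Icc] at hy
    rw [hg, Finset.mem_image]
    refine ⟨y - 1, Finset.mem_erase.mpr ⟨by omega, hrunmem (y - 1) (by omega) (by omega)⟩, ?_⟩
    simp only [hup]
    rw [if_pos (by omega)]
    omega
  have hrl' : rl (g T) = m := by
    apply rl_eq h0' hne' m hm1 (by rw [hsup']; omega)
    · rw [hsup']
      intro y hy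
      rw [Finset.mem_Icc] at hy
      exact hrun' (Finset.mem_Icc.mpr ⟨by omega, hy.2⟩)
    · rw [hsup']
      exact hgap
  -- not Pent
  have hnp' : ¬ Pent (g T) := by
    rintro ⟨a, ha1, hEq | hEq⟩
    · have hd : 2*a - 1 ∈ g T := by rw [hEq, Finset.mem_Icc]; omega
      have h1 := hub _ hd
      have h2 : M + 1 ≤ 2*a - 1 := by
        have := hMmem; rw [hEq, Finset.mem_Icc] at this; omega
      have h3 : ¬ (a ≤ M + 1 - m ∧ M + 1 - m ≤ 2*a - 1) := by
        intro hcon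
        exact hgap (by rw [hEq, Finset.mem_Icc]; exact hcon)
      omega
    · have hd : 2*a ∈ g T := by rw [hEq, Finset.mem_Icc]; omega
      have h1 := hub _ hd
      have h2 : M + 1 ≤ 2*a := by
        have := hMmem; rw [hEq, Finset.mem_Icc] at this; omega
      have h3 : ¬ (a + 1 ≤ M + 1 - m ∧ M + 1 - m ≤ 2*a) := by
        intro hcon
        exact hgap (by rw [hEq, Finset.mem_Icc]; exact hcon)
      omega
  -- g (g T) = T
  have hmin' : m < (g T).min' hne' := hlb _ ((g T).min'_mem hne')
  have hgg : g (g T) = T := by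
    rw [g, dif_pos hne', if_neg (by rw [hrl']; omega), hrl', hsup']
    have e1 : (g T).image (fun x => if M + 1 + 1 - m ≤ x then x - 1 else x) = T.erase m := by
      rw [hg, Finset.image_image]
      have : ∀ x ∈ T.erase m,
          (fun x => if M + 1 + 1 - m ≤ x then x - 1 else x) (up x) = (fun x => x) x := by
        intro x hx
        have hxT := (hEmem x hx).1
        have hxM := le_sup' hxT
        simp only [hup, Function.comp]
        rcases le_or_gt (M + 1 - m) x with h | h
        · rw [if_pos h, if_pos (by omega)]; omega
        · rw [if_neg (show ¬ (M + 1 - m ≤ x) by omega),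
            if_neg (show ¬ (M + 1 + 1 - m ≤ x) by omega)]
      calc (T.erase m).image ((fun x => if M + 1 + 1 - m ≤ x then x - 1 else x) ∘ up)
          = (T.erase m).image (fun x => x) := Finset.image_congr this
        _ = T.erase m := Finset.image_id'
    rw [e1, Finset.insert_erase (T.min'_mem hne)]
  exact ⟨h0', hsum, hcard, hnp', hgg⟩

lemma gB (h0 : 0 ∉ T) (hne : T.Nonempty) (hp : ¬ Pent T) (hB : rl T < T.min' hne) :
    0 ∉ g T ∧ (∑ x ∈ g T, x) = ∑ x ∈ T, x ∧ (g T).card = T.card + 1 ∧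
      ¬ Pent (g T) ∧ g (g T) = T := by
  set M := T.sup id with hM
  set m := T.min' hne with hm
  set k := rl T with hk
  have hm1 : 1 ≤ m := min'_one_le h0 hne
  have hmM : m ≤ M := le_sup' (T.min'_mem hne)
  have hkM : k ≤ M := rl_le
  have hk1 : 1 ≤ k := rl_pos h0 hne
  -- key : 2*k + 1 ≤ M
  have hkey : 2 * k + 1 ≤ M := by
    rcases le_or_gt (M + 1 - k) m with hge | hlt
    · obtain ⟨hrun, hke⟩ := full_run h0 hne hge
      by_contra hcon
      exact hp ⟨k, hk1, Or.inr (by rw [hrun]; congr 1 <;> omega)⟩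
    · have hmem := pred_run_not_mem h0 hne
      have : m ≠ M - k := fun h => hmem (h ▸ T.min'_mem hne)
      omega
  have hbelow : ∀ x ∈ T, x < M + 1 - k → x ≤ M - k - 1 := by
    intro x hx hlt
    have hmem := pred_run_not_mem h0 hne
    have : x ≠ M - k := fun h => hmem (h ▸ hx)
    omega
  have hg : g T = insert k (T.image (fun x => if M + 1 - k ≤ x then x - 1 else x)) := by
    rw [g, dif_pos hne, if_neg (by omega)]
  set dn := fun x => if M + 1 - k ≤ x then x - 1 else x with hdn
  have hmlb : ∀ x ∈ T, m ≤ x := fun x hx => T.min'_le x hx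
  have hinj : ∀ x ∈ T, ∀ y ∈ T, dn x = dn y → x = y := by
    intro x hx y hy hxy
    simp only [hdn] at hxy
    rcases le_or_gt (M + 1 - k) x with h1 | h1 <;> rcases le_or_gt (M + 1 - k) y with h2 | h2
    · rw [if_pos h1, if_pos h2] at hxy; omega
    · rw [if_pos h1, if_neg (by omega)] at hxy
      have := hbelow y hy h2; omega
    · rw [if_neg (by omega), if_pos h2] at hxy
      have := hbelow x hx h1; omega
    · rw [if_neg (by omega), if_neg (by omega)] at hxy; omega
  have hgt : ∀ y ∈ T.image dn, k < y := by
    intro y hy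
    rw [Finset.mem_image] at hy
    obtain ⟨x, hx, hxy⟩ := hy
    have h1 := hmlb x hx
    simp only [hdn] at hxy
    split_ifs at hxy <;> omega
  have hknot : k ∉ T.image dn := fun h => absurd (hgt k h) (lt_irrefl k)
  -- 0 ∉ g T
  have h0' : 0 ∉ g T := by
    rw [hg, Finset.mem_insert]
    rintro (h | h)
    · omega
    · exact absurd (hgt 0 h) (by omega)
  -- sum
  have hfilter : T.filter (fun x => M + 1 - k ≤ x) = Finset.Icc (M + 1 - k) M := by
    ext x
    simp only [Finset.mem_filter, Finset.mem_Icc]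
    constructor
    · rintro ⟨hxT, hx⟩
      exact ⟨hx, le_sup' hxT⟩
    · rintro ⟨h1, h2⟩
      exact ⟨run_sub h0 hne (Finset.mem_Icc.mpr ⟨h1, h2⟩), h1⟩
  have hcardfil : (T.filter (fun x => M + 1 - k ≤ x)).card = k := by
    rw [hfilter, Nat.card_Icc]; omega
  have hsumim : (∑ x ∈ T.image dn, x) + k = ∑ x ∈ T, x := by
    rw [Finset.sum_image hinj]
    have e1 : ∑ x ∈ T, dn x = ∑ x ∈ T, (x - if M + 1 - k ≤ x then 1 else 0) := by
      apply Finset.sum_congr rfl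
      intro x hx
      simp only [hdn]
      split_ifs <;> omega
    have e2 : ∑ x ∈ T, (x - if M + 1 - k ≤ x then 1 else 0)
        + ∑ x ∈ T, (if M + 1 - k ≤ x then 1 else 0) = ∑ x ∈ T, x := by
      rw [← Finset.sum_add_distrib]
      apply Finset.sum_congr rfl
      intro x hx
      split_ifs with h
      · have : 1 ≤ x := by omega
        omega
      · omega
    have e3 : (∑ x ∈ T, if M + 1 - k ≤ x then 1 else 0)
        = (T.filter (fun x => M + 1 - k ≤ x)).card := by
      rw [Finset.card_filter]
    omega
  have hsum : (∑ x ∈ g T, x) = ∑ x ∈ T, x := by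
    rw [hg, Finset.sum_insert hknot]
    omega
  -- card
  have hcard : (g T).card = T.card + 1 := by
    rw [hg, Finset.card_insert_of_notMem hknot, Finset.card_image_of_injOn hinj]
  -- structure of T' := g T
  have hmemT' : ∀ y, y ∈ g T ↔ y = k ∨ ∃ x ∈ T, dn x = y := by
    intro y
    rw [hg, Finset.mem_insert, Finset.mem_image]
  have hub : ∀ y ∈ g T, y ≤ M - 1 := by
    intro y hy
    rw [hmemT'] at hy
    rcases hy with rfl | ⟨x, hx, hxy⟩
    · omega
    · have h1 := le_sup' hx
      have h2 := hbelow x hx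
      simp only [hdn] at hxy
      split_ifs at hxy <;> omega
  have hlbk : ∀ y ∈ g T, k ≤ y := by
    intro y hy
    rw [hmemT'] at hy
    rcases hy with rfl | ⟨x, hx, hxy⟩
    · omega
    · exact le_of_lt (hgt y (Finset.mem_image.mpr ⟨x, hx, hxy⟩))
  have hkmem : k ∈ g T := by rw [hg]; exact Finset.mem_insert_self _ _
  have hne' : (g T).Nonempty := ⟨k, hkmem⟩
  have hsup' : (g T).sup id = M - 1 := by
    apply le_antisymm (Finset.sup_le fun y hy => hub y hy)
    apply le_sup'
    rw [hmemT']
    refine Or.inr ⟨M, sup_mem hne, ?_⟩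
    simp only [hdn]
    rw [if_pos (by omega)]
  have hmin' : (g T).min' hne' = k :=
    le_antisymm ((g T).min'_le k hkmem) (Finset.le_min' _ _ _ hlbk)
  have hrun' : Finset.Icc (M - k) (M - 1) ⊆ g T := by
    intro y hy
    rw [Finset.mem_Icc] at hy
    rw [hmemT']
    refine Or.inr ⟨y + 1, run_sub h0 hne (Finset.mem_Icc.mpr ⟨by omega, by omega⟩), ?_⟩
    simp only [hdn]
    rw [if_pos (by omega)]
    omega
  have hrlge : k ≤ rl (g T) := by
    apply Nat.le_findGreatest (by rw [hsup']; omega)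
    rw [hsup']
    intro y hy
    rw [Finset.mem_Icc] at hy
    exact hrun' (Finset.mem_Icc.mpr ⟨by omega, by omega⟩)
  -- not Pent
  have hnp' : ¬ Pent (g T) := by
    rintro ⟨a, ha1, hEq | hEq⟩
    · have h1 : a ≤ k := by
        have := hkmem; rw [hEq, Finset.mem_Icc] at this; omega
      have h2 : k ≤ a := by
        apply hlbk
        rw [hEq, Finset.mem_Icc]; omega
      have h3 : M - 1 ≤ 2*a - 1 := by
        have : M - 1 ∈ g T := by
          rw [hmemT']
          refine Or.inr ⟨M, sup_mem hne, ?_⟩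
          simp only [hdn]; rw [if_pos (by omega)]
        rw [hEq, Finset.mem_Icc] at this; omega
      omega
    · have h1 : a + 1 ≤ k := by
        have := hkmem; rw [hEq, Finset.mem_Icc] at this; omega
      have h2 : k ≤ a + 1 := by
        apply hlbk
        rw [hEq, Finset.mem_Icc]; omega
      have h3 : M - 1 ≤ 2*a := by
        have : M - 1 ∈ g T := by
          rw [hmemT']
          refine Or.inr ⟨M, sup_mem hne, ?_⟩
          simp only [hdn]; rw [if_pos (by omega)]
        rw [hEq, Finset.mem_Icc] at this; omega
      omega
  -- g (g T) = T
  have hgg : g (g T) = T := by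
    rw [g, dif_pos hne', if_pos (by rw [hmin']; exact hrlge), hmin', hsup']
    have e0 : (g T).erase k = T.image dn := by
      rw [hg, Finset.erase_insert hknot]
    rw [e0, Finset.image_image]
    have e1 : ∀ x ∈ T,
        ((fun x => if M - 1 + 1 - k ≤ x then x + 1 else x) ∘ dn) x = (fun x => x) x := by
      intro x hx
      simp only [hdn, Function.comp]
      rcases le_or_gt (M + 1 - k) x with h | h
      · rw [if_pos h, if_pos (by omega)]
        omega
      · have := hbelow x hx h
        rw [if_neg (show ¬ (M + 1 - k ≤ x) by omega),
          if_neg (show ¬ (M - 1 + 1 - k ≤ x) by omega)]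
    calc T.image ((fun x => if M - 1 + 1 - k ≤ x then x + 1 else x) ∘ dn)
        = T.image (fun x => x) := Finset.image_congr e1
      _ = T := Finset.image_id'
  exact ⟨h0', hsum, hcard, hnp', hgg⟩

lemma g_spec (h0 : 0 ∉ T) (hne : T.Nonempty) (hp : ¬ Pent T) :
    0 ∉ g T ∧ (∑ x ∈ g T, x) = ∑ x ∈ T, x ∧ (g T).card ≠ T.card ∧
      ((-1 : ℤ) ^ T.card + (-1 : ℤ) ^ (g T).card = 0) ∧ ¬ Pent (g T) ∧ g (g T) = T := by
  rcases le_or_gt (T.min' hne) (rl T) with h | h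
  · obtain ⟨h1, h2, h3, h4, h5⟩ := gA h0 hne hp h
    refine ⟨h1, h2, by omega, ?_, h4, h5⟩
    rw [h3, pow_succ]
    ring
  · obtain ⟨h1, h2, h3, h4, h5⟩ := gB h0 hne hp h
    refine ⟨h1, h2, by omega, ?_, h4, h5⟩
    rw [h3, pow_succ]
    ring

/-- the relevant family of sets -/
def D (r : ℕ) : Finset (Finset ℕ) :=
  (Finset.Icc 1 r).powerset.filter (fun T => ∑ i ∈ T, i = r)

lemma mem_D {r : ℕ} {T : Finset ℕ} : T ∈ D r ↔ 0 ∉ T ∧ ∑ i ∈ T, i = r := by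
  rw [D, Finset.mem_filter, Finset.mem_powerset]
  constructor
  · rintro ⟨hsub, hsum⟩
    refine ⟨fun h => ?_, hsum⟩
    have := hsub h
    rw [Finset.mem_Icc] at this
    omega
  · rintro ⟨h0, hsum⟩
    refine ⟨fun x hx => ?_, hsum⟩
    rw [Finset.mem_Icc]
    have hx1 : x ≠ 0 := fun h => h0 (h ▸ hx)
    have hx2 : x ≤ ∑ y ∈ T, y :=
      Finset.single_le_sum (f := fun y => y) (fun _ _ => Nat.zero_le _) hx
    omega

lemma D_nonempty_mem {r : ℕ} {T : Finset ℕ} (hr : 1 ≤ r) (hT : T ∈ D r) : T.Nonempty := by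
  rcases Finset.eq_empty_or_nonempty T with rfl | h
  · rw [mem_D] at hT
    simp at hT
    omega
  · exact h

lemma twoSumIcc (a c : ℕ) : 2 * ∑ i ∈ Finset.Icc a (a+c), i = 2*(c+1)*a + (c+1)*c := by
  rw [← Finset.Ico_add_one_right_eq_Icc, Finset.sum_Ico_eq_sum_range]
  have h2 : a + c + 1 - a = c + 1 := by omega
  rw [h2, Finset.sum_add_distrib, Finset.sum_const, smul_eq_mul, Finset.card_range]
  have h3 := Finset.sum_range_id_mul_two (c+1)
  have h4 : (c+1)*((c+1)-1) = (c+1)*c := by rw [Nat.add_sub_cancel]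
  rw [Nat.mul_add, ← h4, ← h3]
  ring

lemma sum_pent1 (a : ℕ) (ha : 1 ≤ a) : 2 * ∑ i ∈ Finset.Icc a (2*a-1), i = a * (3*a-1) := by
  obtain ⟨b, rfl⟩ : ∃ b, a = b + 1 := ⟨a - 1, by omega⟩
  have h1 : 2*(b+1)-1 = (b+1) + b := by omega
  rw [h1, twoSumIcc]
  have h2 : 3*(b+1)-1 = 3*b+2 := by omega
  rw [h2]
  ring

lemma sum_pent2 (a : ℕ) : 2 * ∑ i ∈ Finset.Icc (a+1) (2*a), i = a * (3*a+1) := by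
  rcases Nat.eq_zero_or_pos a with rfl | ha
  · simp
  have h1 : 2*a = (a+1) + (a-1) := by omega
  rw [h1, twoSumIcc]
  have h2 : a - 1 + 1 = a := by omega
  rw [h2]
  cases a with
  | zero => simp
  | succ b =>
    have h3 : b + 1 - 1 = b := by omega
    rw [h3]
    ring

lemma card_pent1 (a : ℕ) (ha : 1 ≤ a) : (Finset.Icc a (2*a-1)).card = a := by
  rw [Nat.card_Icc]; omega

lemma card_pent2 (a : ℕ) : (Finset.Icc (a+1) (2*a)).card = a := by
  rw [Nat.card_Icc]; omega

lemma pent_sum_eq {r : ℕ} {T : Finset ℕ} (hT : T ∈ D r) (hp : Pent T) :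
    ∃ a, 1 ≤ a ∧ ((2 * r = a * (3*a-1) ∧ T = Finset.Icc a (2*a-1)) ∨
      (2 * r = a * (3*a+1) ∧ T = Finset.Icc (a+1) (2*a))) := by
  obtain ⟨a, ha1, hEq | hEq⟩ := hp
  · refine ⟨a, ha1, Or.inl ⟨?_, hEq⟩⟩
    rw [mem_D] at hT
    rw [← hT.2, hEq]
    exact sum_pent1 a ha1
  · refine ⟨a, ha1, Or.inr ⟨?_, hEq⟩⟩
    rw [mem_D] at hT
    rw [← hT.2, hEq]
    exact sum_pent2 a

-- injectivity / disjointness of pentagonal numbers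
lemma pent1_inj {a s : ℕ} (ha : 1 ≤ a) (hs : 1 ≤ s) (h : a * (3*a-1) = s * (3*s-1)) : a = s := by
  obtain ⟨b, rfl⟩ : ∃ b, a = b + 1 := ⟨a - 1, by omega⟩
  obtain ⟨c, rfl⟩ : ∃ c, s = c + 1 := ⟨s - 1, by omega⟩
  have h1 : 3*(b+1)-1 = 3*b+2 := by omega
  have h2 : 3*(c+1)-1 = 3*c+2 := by omega
  rw [h1, h2] at h
  rcases lt_trichotomy b c with hlt | he | hgt
  · nlinarith
  · omega
  · nlinarith

lemma pent2_inj {a s : ℕ} (h : a * (3*a+1) = s * (3*s+1)) : a = s := by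
  rcases lt_trichotomy a s with hlt | he | hgt
  · nlinarith
  · exact he
  · nlinarith

lemma pent12_ne {a s : ℕ} (ha : 1 ≤ a) (h : a * (3*a-1) = s * (3*s+1)) : False := by
  obtain ⟨b, rfl⟩ : ∃ b, a = b + 1 := ⟨a - 1, by omega⟩
  have h1 : 3*(b+1)-1 = 3*b+2 := by omega
  rw [h1] at h
  rcases le_or_gt (b+1) s with hle | hlt
  · nlinarith
  · have : s ≤ b := by omega
    nlinarith


lemma not_pent_of_forall {r : ℕ} {T : Finset ℕ} (hT : T ∈ D r)
    (h : ∀ s : ℕ, ¬(2 * r = s * (3 * s + 1) ∨ 2 * r = s * (3 * s - 1))) : ¬ Pent T := by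
  intro hp
  obtain ⟨a, ha1, ⟨hs, _⟩ | ⟨hs, _⟩⟩ := pent_sum_eq hT hp
  · exact h a (Or.inr hs)
  · exact h a (Or.inl hs)

lemma D_sum_zero {r : ℕ} (hr : 1 ≤ r)
    (h : ∀ s : ℕ, ¬(2 * r = s * (3 * s + 1) ∨ 2 * r = s * (3 * s - 1))) :
    ∑ T ∈ D r, (-1 : ℤ) ^ T.card = 0 := by
  apply Finset.sum_involution (fun T _ => g T)
  · intro T hT
    obtain ⟨_, _, _, h4, _, _⟩ :=
      g_spec (mem_D.mp hT).1 (D_nonempty_mem hr hT) (not_pent_of_forall hT h)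
    exact h4
  · intro T hT _
    obtain ⟨_, _, h3, _, _, _⟩ :=
      g_spec (mem_D.mp hT).1 (D_nonempty_mem hr hT) (not_pent_of_forall hT h)
    intro he
    exact h3 (by rw [he])
  · intro T hT
    obtain ⟨h1, h2, _, _, _, _⟩ :=
      g_spec (mem_D.mp hT).1 (D_nonempty_mem hr hT) (not_pent_of_forall hT h)
    rw [mem_D]
    exact ⟨h1, h2.trans (mem_D.mp hT).2⟩
  · intro T hT
    obtain ⟨_, _, _, _, _, h6⟩ :=
      g_spec (mem_D.mp hT).1 (D_nonempty_mem hr hT) (not_pent_of_forall hT h)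
    exact h6

lemma D_sum_pent {r s : ℕ} (hr : 1 ≤ r)
    (hs : 2 * r = s * (3 * s + 1) ∨ 2 * r = s * (3 * s - 1)) :
    ∑ T ∈ D r, (-1 : ℤ) ^ T.card = (-1 : ℤ) ^ s := by
  have hs1 : 1 ≤ s := by
    rcases Nat.eq_zero_or_pos s with rfl | h
    · simp at hs; omega
    · exact h
  -- the unique exceptional set E
  obtain ⟨E, hED, hEcard, hEpent, hEuniq⟩ :
      ∃ E, E ∈ D r ∧ E.card = s ∧ Pent E ∧ ∀ T ∈ D r, Pent T → T = E := by
    rcases hs with hs | hs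
    · refine ⟨Finset.Icc (s+1) (2*s), ?_, card_pent2 s, ⟨s, hs1, Or.inr rfl⟩, ?_⟩
      · rw [mem_D]
        constructor
        · rw [Finset.mem_Icc]; omega
        · have := sum_pent2 s; omega
      · intro T hT hp
        obtain ⟨a, ha1, ⟨ha, hEq⟩ | ⟨ha, hEq⟩⟩ := pent_sum_eq hT hp
        · exact absurd (by omega : a * (3*a-1) = s * (3*s+1)) (fun h => pent12_ne ha1 h)
        · have : a = s := pent2_inj (by omega)
          rw [hEq, this]
    · refine ⟨Finset.Icc s (2*s-1), ?_, card_pent1 s hs1, ⟨s, hs1, Or.inl rfl⟩, ?_⟩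
      · rw [mem_D]
        constructor
        · rw [Finset.mem_Icc]; omega
        · have := sum_pent1 s hs1; omega
      · intro T hT hp
        obtain ⟨a, ha1, ⟨ha, hEq⟩ | ⟨ha, hEq⟩⟩ := pent_sum_eq hT hp
        · have : a = s := pent1_inj ha1 hs1 (by omega)
          rw [hEq, this]
        · exact absurd (by omega : s * (3*s-1) = a * (3*a+1)) (fun h => pent12_ne hs1 h)
  rw [← Finset.sum_erase_add (D r) _ hED, hEcard]
  have herase : ∑ T ∈ (D r).erase E, (-1 : ℤ) ^ T.card = 0 := by
    apply Finset.sum_involution (fun T _ => g T)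
    · intro T hT
      rw [Finset.mem_erase] at hT
      obtain ⟨_, _, _, h4, _, _⟩ := g_spec (mem_D.mp hT.2).1 (D_nonempty_mem hr hT.2)
        (fun hp => hT.1 (hEuniq T hT.2 hp))
      exact h4
    · intro T hT _
      rw [Finset.mem_erase] at hT
      obtain ⟨_, _, h3, _, _, _⟩ := g_spec (mem_D.mp hT.2).1 (D_nonempty_mem hr hT.2)
        (fun hp => hT.1 (hEuniq T hT.2 hp))
      intro he
      exact h3 (by rw [he])
    · intro T hT
      rw [Finset.mem_erase] at hT
      obtain ⟨h1, h2, _, _, h5, _⟩ := g_spec (mem_D.mp hT.2).1 (D_nonempty_mem hr hT.2)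
        (fun hp => hT.1 (hEuniq T hT.2 hp))
      rw [Finset.mem_erase]
      constructor
      · intro he
        exact h5 (he ▸ hEpent)
      · rw [mem_D]
        exact ⟨h1, h2.trans (mem_D.mp hT.2).2⟩
    · intro T hT
      rw [Finset.mem_erase] at hT
      obtain ⟨_, _, _, _, _, h6⟩ := g_spec (mem_D.mp hT.2).1 (D_nonempty_mem hr hT.2)
        (fun hp => hT.1 (hEuniq T hT.2 hp))
      exact h6
  rw [herase, zero_add]

lemma psi_eq (n r : ℕ) (h2 : r ≤ n) :
    psi n (r : ℤ) = ∑ T ∈ D r, (-1 : ℤ) ^ T.card := by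
  rw [psi, D]
  apply Finset.sum_congr _ (fun _ _ => rfl)
  ext T
  rw [Finset.mem_filter, Finset.mem_filter, Finset.mem_powerset, Finset.mem_powerset]
  have hcast : (∑ i ∈ T, (i : ℤ)) = ((∑ i ∈ T, i : ℕ) : ℤ) := by push_cast; rfl
  rw [hcast]
  constructor
  · rintro ⟨hsub, hsum⟩
    have hsum' : ∑ i ∈ T, i = r := by exact_mod_cast hsum
    refine ⟨fun x hx => ?_, by exact_mod_cast hsum⟩
    have h1 := hsub hx
    rw [Finset.mem_Icc] at h1 ⊢
    have hx2 : x ≤ ∑ y ∈ T, y :=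
      Finset.single_le_sum (f := fun y => y) (fun _ _ => Nat.zero_le _) hx
    omega
  · rintro ⟨hsub, hsum⟩
    refine ⟨fun x hx => ?_, by exact_mod_cast hsum⟩
    have h1 := hsub hx
    rw [Finset.mem_Icc] at h1 ⊢
    omega

end Franklin

theorem stmt_17 (n r : ℕ) (h1 : 1 ≤ r) (h2 : r ≤ n) :
    (∀ s : ℕ, (2 * r = s * (3 * s + 1) ∨ 2 * r = s * (3 * s - 1)) →
        psi n r = (-1 : ℤ) ^ s) ∧
    ((∀ s : ℕ, ¬(2 * r = s * (3 * s + 1) ∨ 2 * r = s * (3 * s - 1))) → psi n r = 0) := by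
  constructor
  · intro s hs
    rw [Franklin.psi_eq n r h2]
    exact Franklin.D_sum_pent h1 hs
  · intro h
    rw [Franklin.psi_eq n r h2]
    exact Franklin.D_sum_zero h1 h
end

section
/- Let $d^*$ be a refinement of $d$ (every $d_i$ appears among the $d^*_j$), with both sequences strictly increasing in $[n-1]$. Then the inversion counts of the associated multiset permutations satisfy $I_n(d;k) \le I_n(d^*;k)$ for all $k \in \mathbb{N}$. -/
/-- The number of inversions of a word `w`: pairs of positions `i < j` with `w j < w i`. -/
def invWord {n m : ℕ} (w : Fin n → Fin m) : ℕ :=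
  (Finset.univ.filter (fun p : Fin n × Fin n => p.1 < p.2 ∧ w p.2 < w p.1)).card

/-- `lbl d i` is the (0-based) block label of position `i` for the block structure with
boundaries `d₁ < ⋯ < d_r`, i.e. the number of boundaries `≤ i`. -/
def lbl {n r : ℕ} (d : Fin r → ℕ) (i : Fin n) : Fin (r + 1) :=
  ⟨(Finset.univ.filter (fun m : Fin r => d m ≤ (i : ℕ))).card,
    Nat.lt_succ_of_le (le_trans (Finset.card_filter_le _ _) (by simp))⟩

/-- `I n r d k`: the number of permutations of the multiset
`{1^{e₁}, …, (r+1)^{e_{r+1}}}` (where `eᵢ = dᵢ - d_{i-1}`, encoded as words that are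
rearrangements of the label word of `d`) with exactly `k` inversions. -/
def Icount (n r : ℕ) (d : Fin r → ℕ) (k : ℕ) : ℕ :=
  (Finset.univ.filter (fun w : Fin n → Fin (r + 1) =>
    (∀ c, (Finset.univ.filter (fun j => w j = c)).card
        = (Finset.univ.filter (fun j : Fin n => lbl d j = c)).card) ∧
    invWord w = k)).card

open Finset

section Rearr

variable {n : ℕ} {α : Type*} [LinearOrder α] [DecidableEq α]

/-- Auxiliary: send the position `p` (lying in the fiber of `w` over `a`) to the
position of the same rank in the fiber of `v` over `a`. -/
noncomputable def rearrAux (w v : Fin n → α)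
    (hw : ∀ a, (univ.filter (fun p => w p = a)).card = (univ.filter (fun p => v p = a)).card)
    (a : α) (p : Fin n) (hp : w p = a) : Fin n :=
  ((univ.filter (fun q => v q = a)).orderIsoOfFin (hw a).symm
    (((univ.filter (fun q : Fin n => w q = a)).orderIsoOfFin rfl).symm
      ⟨p, by simp [hp]⟩)).1

noncomputable def rearr (w v : Fin n → α)
    (hw : ∀ a, (univ.filter (fun p => w p = a)).card = (univ.filter (fun p => v p = a)).card)
    (p : Fin n) : Fin n :=
  rearrAux w v hw (w p) p rfl

lemma rearrAux_mem (w v : Fin n → α) (hw) (a : α) (p : Fin n) (hp : w p = a) :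
    v (rearrAux w v hw a p hp) = a := by
  have h := ((univ.filter (fun q => v q = a)).orderIsoOfFin (hw a).symm
    (((univ.filter (fun q : Fin n => w q = a)).orderIsoOfFin rfl).symm
      ⟨p, by simp [hp]⟩)).2
  simp only [mem_filter, mem_univ, true_and] at h
  exact h

lemma rearr_v (w v : Fin n → α) (hw) (p : Fin n) :
    v (rearr w v hw p) = w p :=
  rearrAux_mem w v hw (w p) p rfl

lemma rearrAux_lt (w v : Fin n → α) (hw) (a : α) (p q : Fin n) (hp : w p = a) (hq : w q = a)
    (hpq : p < q) : rearrAux w v hw a p hp < rearrAux w v hw a q hq := by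
  unfold rearrAux
  refine Subtype.coe_lt_coe.mpr ?_
  rw [OrderIso.lt_iff_lt, OrderIso.lt_iff_lt]
  exact Subtype.mk_lt_mk.mpr hpq

lemma rearr_eq_aux (w v : Fin n → α) (hw) (a : α) (q : Fin n) (h : w q = a) :
    rearr w v hw q = rearrAux w v hw a q h := by
  cases h; rfl

lemma rearr_lt (w v : Fin n → α) (hw) (p q : Fin n) (h : w p = w q) (hpq : p < q) :
    rearr w v hw p < rearr w v hw q := by
  rw [rearr_eq_aux w v hw (w p) q h.symm]
  exact rearrAux_lt w v hw (w p) p q rfl h.symm hpq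

lemma rearrAux_inj (w v : Fin n → α) (hw) (a : α) (p q : Fin n) (hp : w p = a) (hq : w q = a)
    (h : rearrAux w v hw a p hp = rearrAux w v hw a q hq) : p = q := by
  unfold rearrAux at h
  have h1 := Subtype.ext h
  have h2 := (((univ.filter (fun q => v q = a)).orderIsoOfFin (hw a).symm)).injective h1
  have h3 := (((univ.filter (fun q : Fin n => w q = a)).orderIsoOfFin rfl).symm).injective h2
  exact congrArg Subtype.val h3

lemma rearr_inj (w v : Fin n → α) (hw) : Function.Injective (rearr w v hw) := by
  intro p q h
  have hpq : w p = w q := by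
    rw [← rearr_v w v hw p, ← rearr_v w v hw q, h]
  rw [rearr_eq_aux w v hw (w p) q hpq.symm] at h
  exact rearrAux_inj w v hw (w p) p q rfl hpq.symm h

lemma rearr_surj (w v : Fin n → α) (hw) : Function.Surjective (rearr w v hw) :=
  Finite.surjective_of_injective (rearr_inj w v hw)

end Rearr

lemma lbl_lt_iff {n s : ℕ} {d' : Fin s → ℕ} (hd' : StrictMono d') (i : Fin n) (j : Fin s) :
    d' j ≤ (i : ℕ) ↔ (j : ℕ) < (lbl d' i : ℕ) := by
  show _ ↔ (j : ℕ) < (univ.filter (fun m : Fin s => d' m ≤ (i : ℕ))).card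
  constructor
  · intro h
    have hsub : Finset.Iic j ⊆ univ.filter (fun m : Fin s => d' m ≤ (i : ℕ)) := by
      intro m hm
      simp only [mem_filter, mem_univ, true_and]
      exact le_trans (hd'.monotone (mem_Iic.mp hm)) h
    have hc := card_le_card hsub
    rw [Fin.card_Iic] at hc
    omega
  · intro h
    by_contra hc
    have hsub : univ.filter (fun m : Fin s => d' m ≤ (i : ℕ)) ⊆ Finset.Iio j := by
      intro m hm
      simp only [mem_filter, mem_univ, true_and] at hm
      rw [mem_Iio]
      by_contra hm2
      push_neg at hm2
      exact hc (le_trans (hd'.monotone hm2) hm)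
    have := card_le_card hsub
    rw [Fin.card_Iio] at this
    omega

lemma lbl_mono {n r : ℕ} (d : Fin r → ℕ) : Monotone (lbl (n := n) d) := by
  intro i i' h
  rw [Fin.le_def]
  show (univ.filter (fun m : Fin r => d m ≤ (i : ℕ))).card ≤ (univ.filter (fun m : Fin r => d m ≤ (i' : ℕ))).card
  apply card_le_card
  intro m hm
  simp only [mem_filter, mem_univ, true_and] at hm ⊢
  exact le_trans hm h

lemma lt_iff_of_monotone {α β : Type*} [LinearOrder α] [LinearOrder β] {φ : α → β}
    (hφ : Monotone φ) {x y : α} (h : φ x ≠ φ y) : x < y ↔ φ x < φ y := by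
  constructor
  · intro hxy
    exact lt_of_le_of_ne (hφ hxy.le) h
  · intro hxy
    by_contra h'
    push_neg at h'
    exact absurd (hφ h') (not_le_of_gt hxy)

set_option maxHeartbeats 2000000 in
/-- If `d*` refines `d`, then `I_n(d;k) ≤ I_n(d*;k)` for all `k`. -/
theorem stmt_19 (n r s : ℕ) (d : Fin r → ℕ) (d' : Fin s → ℕ)
    (hd : StrictMono d) (hd' : StrictMono d')
    (hdpos : ∀ i, 0 < d i) (hdlt : ∀ i, d i < n)
    (hd'pos : ∀ i, 0 < d' i) (hd'lt : ∀ i, d' i < n)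
    (href : ∀ i : Fin r, ∃ j : Fin s, d' j = d i) :
    ∀ k : ℕ, Icount n r d k ≤ Icount n s d' k := by
  classical
  intro k
  -- the coarsening map on letters
  set jf : Fin r → Fin s := fun m => (href m).choose with hjf
  have hj : ∀ m, d' (jf m) = d m := fun m => (href m).choose_spec
  set φ : Fin (s + 1) → Fin (r + 1) := fun c =>
    ⟨(univ.filter (fun m : Fin r => (jf m : ℕ) < (c : ℕ))).card,
      Nat.lt_succ_of_le (le_trans (Finset.card_filter_le _ _) (by simp))⟩ with hφdef
  have hφmono : Monotone φ := by
    intro c c' h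
    rw [Fin.le_def]
    show (univ.filter (fun m : Fin r => (jf m : ℕ) < (c : ℕ))).card ≤ (univ.filter (fun m : Fin r => (jf m : ℕ) < (c' : ℕ))).card
    apply card_le_card
    intro m hm
    simp only [mem_filter, mem_univ, true_and] at hm ⊢
    exact lt_of_lt_of_le hm h
  have hφlbl : ∀ i : Fin n, φ (lbl d' i) = lbl d i := by
    intro i
    apply Fin.ext
    show (univ.filter (fun m : Fin r => (jf m : ℕ) < (lbl d' i : ℕ))).card = (univ.filter (fun m : Fin r => d m ≤ (i : ℕ))).card
    congr 1
    apply filter_congr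
    intro m _
    simp only [← lbl_lt_iff hd' i (jf m), hj m]
  -- main injection
  unfold Icount
  set F : (Fin n → Fin (r + 1)) → (Fin n → Fin (s + 1)) := fun w =>
    if h : (∀ c, (univ.filter (fun j => w j = c)).card
        = (univ.filter (fun j : Fin n => lbl d j = c)).card)
    then fun p => lbl d' (rearr w (lbl d) h p) else fun _ => 0 with hF
  have hFeq : ∀ (w : Fin n → Fin (r + 1))
      (h : ∀ c, (univ.filter (fun j => w j = c)).card
        = (univ.filter (fun j : Fin n => lbl d j = c)).card),
      F w = fun p => lbl d' (rearr w (lbl d) h p) := by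
    intro w h
    rw [hF]
    exact dif_pos h
  apply Finset.card_le_card_of_injOn F
  · -- maps into
    intro w hwmem
    simp only [mem_coe, mem_filter, mem_univ, true_and] at hwmem ⊢
    obtain ⟨hw, hinv⟩ := hwmem
    rw [hFeq w hw]
    constructor
    · -- counts
      intro c
      apply Finset.card_bij (fun p _ => rearr w (lbl d) hw p)
      · intro p hp
        simp only [mem_filter, mem_univ, true_and] at hp ⊢
        exact hp
      · intro p _ q _ h
        exact rearr_inj w (lbl d) hw h
      · intro q hq
        simp only [mem_filter, mem_univ, true_and] at hq
        obtain ⟨p, hp⟩ := rearr_surj w (lbl d) hw q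
        refine ⟨p, ?_, hp⟩
        simp only [mem_filter, mem_univ, true_and, hp]
        exact hq
    · -- inversions
      rw [← hinv]
      unfold invWord
      congr 1
      apply filter_congr
      rintro ⟨p, q⟩ _
      simp only
      constructor
      · rintro ⟨hpq, hlt⟩
        refine ⟨hpq, ?_⟩
        by_cases hweq : w p = w q
        · exfalso
          have := lbl_mono d' (rearr_lt w (lbl d) hw p q hweq hpq).le
          exact absurd this (not_le_of_gt hlt)
        · have hne : φ (lbl d' (rearr w (lbl d) hw q)) ≠ φ (lbl d' (rearr w (lbl d) hw p)) := by
            rw [hφlbl, hφlbl, rearr_v w (lbl d) hw q, rearr_v w (lbl d) hw p]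
            exact fun h => hweq h.symm
          have := (lt_iff_of_monotone hφmono hne).mp hlt
          rwa [hφlbl, hφlbl, rearr_v w (lbl d) hw q, rearr_v w (lbl d) hw p] at this
      · rintro ⟨hpq, hlt⟩
        refine ⟨hpq, ?_⟩
        have hweq : w p ≠ w q := ne_of_gt hlt
        have hne : φ (lbl d' (rearr w (lbl d) hw q)) ≠ φ (lbl d' (rearr w (lbl d) hw p)) := by
          rw [hφlbl, hφlbl, rearr_v w (lbl d) hw q, rearr_v w (lbl d) hw p]
          exact fun h => hweq h.symm
        apply (lt_iff_of_monotone hφmono hne).mpr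
        rwa [hφlbl, hφlbl, rearr_v w (lbl d) hw q, rearr_v w (lbl d) hw p]
  · -- injectivity
    intro w₁ hw₁ w₂ hw₂ h
    simp only [coe_filter, mem_univ, true_and, Set.mem_setOf_eq] at hw₁ hw₂
    obtain ⟨hc₁, _⟩ := hw₁
    obtain ⟨hc₂, _⟩ := hw₂
    funext p
    have h1 : w₁ p = φ (F w₁ p) := by
      rw [hFeq w₁ hc₁]
      simp only
      rw [hφlbl, rearr_v w₁ (lbl d) hc₁ p]
    have h2 : w₂ p = φ (F w₂ p) := by
      rw [hFeq w₂ hc₂]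
      simp only
      rw [hφlbl, rearr_v w₂ (lbl d) hc₂ p]
    rw [h1, h2, h]
end
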